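/- Let T, T' be closed linear operators from \sH to \sK and \sK' with dom T = dom T', and let B \in B(\sK), B' \in B(\sK') be selfadjoint. Suppose ((I + iB) T h, T k) = ((I + iB') T' h, T' k) for all h, k \in dom T. Then there is a unitary U : clos(ran T) \to clos(ran T') with T' = U T and B'_{bb} = U B_{bb} U^*, where B_{bb} and B'_{bb} are the compressions of B and B' to clos(ran T) and clos(ran T') respectively. -/

import Mathlib

open scoped ComplexInnerProductSpace
open Complex

/-- Polarization for a general sesquilinear form (linear in first slot, conjugate-linear in
second slot). -/
lemma sesq_polarization {E : Type*} [AddCommGroup E] [Module ℂ E]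
    (Φ : E → E → ℂ)
    (addl : ∀ x x' y, Φ (x + x') y = Φ x y + Φ x' y)
    (addr : ∀ x y y', Φ x (y + y') = Φ x y + Φ x y')
    (smull : ∀ (c : ℂ) x y, Φ (c • x) y = c * Φ x y)
    (smulr : ∀ (c : ℂ) x y, Φ x (c • y) = (starRingEnd ℂ) c * Φ x y)
    (x y : E) :
    Φ x y = (Φ (x + y) (x + y) - Φ (x - y) (x - y)
      + Complex.I * Φ (x + Complex.I • y) (x + Complex.I • y)
      - Complex.I * Φ (x - Complex.I • y) (x - Complex.I • y)) / 4 := by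
  have subl : ∀ x x' y, Φ (x - x') y = Φ x y - Φ x' y := by
    intro a b c
    have := addl (a - b) b c
    rw [sub_add_cancel] at this
    rw [eq_sub_iff_add_eq, ← this]
  have subr : ∀ x y y', Φ x (y - y') = Φ x y - Φ x y' := by
    intro a b c
    have := addr a (b - c) c
    rw [sub_add_cancel] at this
    rw [eq_sub_iff_add_eq, ← this]
  simp only [addl, addr, subl, subr, smull, smulr, Complex.conj_I]
  ring_nf
  simp only [Complex.I_sq]
  ring

lemma phi_polar {E F : Type*} [AddCommGroup E] [Module ℂ E]
    [NormedAddCommGroup F] [InnerProductSpace ℂ F]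
    (C : E →ₗ[ℂ] F) (D : F →L[ℂ] F) (x y : E) :
    (fun x y : E => (⟪C y, C x + Complex.I • D (C x)⟫ : ℂ)) x y
      = ((fun x y : E => (⟪C y, C x + Complex.I • D (C x)⟫ : ℂ)) (x + y) (x + y)
        - (fun x y : E => (⟪C y, C x + Complex.I • D (C x)⟫ : ℂ)) (x - y) (x - y)
        + Complex.I * (fun x y : E => (⟪C y, C x + Complex.I • D (C x)⟫ : ℂ))
            (x + Complex.I • y) (x + Complex.I • y)
        - Complex.I * (fun x y : E => (⟪C y, C x + Complex.I • D (C x)⟫ : ℂ))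
            (x - Complex.I • y) (x - Complex.I • y)) / 4 := by
  refine sesq_polarization (fun x y : E => (⟪C y, C x + Complex.I • D (C x)⟫ : ℂ))
    ?_ ?_ ?_ ?_ x y <;> intros <;>
    simp [inner_add_right, inner_add_left, inner_smul_right, inner_smul_left,
      map_add, map_smul, smul_smul] <;> ring

lemma forms_eq_of_diag {E K K' : Type*} [AddCommGroup E] [Module ℂ E]
    [NormedAddCommGroup K] [InnerProductSpace ℂ K] [CompleteSpace K]
    [NormedAddCommGroup K'] [InnerProductSpace ℂ K'] [CompleteSpace K']
    (A : E →ₗ[ℂ] K) (A' : E →ₗ[ℂ] K')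
    (B : K →L[ℂ] K) (hB : IsSelfAdjoint B) (B' : K' →L[ℂ] K') (hB' : IsSelfAdjoint B')
    (hdiag : ∀ x : E, ⟪A x, A x + Complex.I • B (A x)⟫
      = ⟪A' x, A' x + Complex.I • B' (A' x)⟫) :
    (∀ x y : E, ⟪A y, A x⟫ = ⟪A' y, A' x⟫) ∧
      (∀ x y : E, ⟪A y, B (A x)⟫ = ⟪A' y, B' (A' x)⟫) := by
  have hΦΦ' : ∀ x y : E, (⟪A y, A x + Complex.I • B (A x)⟫ : ℂ)
      = ⟪A' y, A' x + Complex.I • B' (A' x)⟫ := by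
    intro x y
    have h1 := phi_polar A B x y
    have h2 := phi_polar A' B' x y
    simp only at h1 h2
    rw [h1, h2, hdiag, hdiag, hdiag, hdiag]
  have hsplit : ∀ x y : E, (⟪A y, A x + Complex.I • B (A x)⟫ : ℂ)
      = ⟪A y, A x⟫ + Complex.I * ⟪A y, B (A x)⟫ := by
    intro x y; simp [inner_add_right, inner_smul_right]
  have hsplit' : ∀ x y : E, (⟪A' y, A' x + Complex.I • B' (A' x)⟫ : ℂ)
      = ⟪A' y, A' x⟫ + Complex.I * ⟪A' y, B' (A' x)⟫ := by
    intro x y; simp [inner_add_right, inner_smul_right]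
  have hconj : ∀ x y : E, (starRingEnd ℂ) (⟪A x, A y + Complex.I • B (A y)⟫ : ℂ)
      = ⟪A y, A x⟫ - Complex.I * ⟪A y, B (A x)⟫ := by
    intro x y
    rw [hsplit, map_add, map_mul, Complex.conj_I, inner_conj_symm, inner_conj_symm]
    have hsym := hB.isSymmetric (A y) (A x)
    simp only [ContinuousLinearMap.coe_coe] at hsym
    rw [hsym]; ring
  have hconj' : ∀ x y : E, (starRingEnd ℂ) (⟪A' x, A' y + Complex.I • B' (A' y)⟫ : ℂ)
      = ⟪A' y, A' x⟫ - Complex.I * ⟪A' y, B' (A' x)⟫ := by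
    intro x y
    rw [hsplit', map_add, map_mul, Complex.conj_I, inner_conj_symm, inner_conj_symm]
    have hsym := hB'.isSymmetric (A' y) (A' x)
    simp only [ContinuousLinearMap.coe_coe] at hsym
    rw [hsym]; ring
  constructor
  · intro x y
    have h1 := hΦΦ' x y
    have h2 := congrArg (starRingEnd ℂ) (hΦΦ' y x)
    rw [hsplit, hsplit'] at h1
    rw [hconj, hconj'] at h2
    linear_combination (h1 + h2) / 2
  · intro x y
    have h1 := hΦΦ' x y
    have h2 := congrArg (starRingEnd ℂ) (hΦΦ' y x)
    rw [hsplit, hsplit'] at h1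
    rw [hconj, hconj'] at h2
    have hI : Complex.I ≠ 0 := Complex.I_ne_zero
    exact mul_left_cancel₀ hI (by linear_combination (h1 - h2) / 2)

lemma hdense_aux {F₀ : Type*} [NormedAddCommGroup F₀] [InnerProductSpace ℂ F₀]
    (p : Submodule ℂ F₀) (z : ↥p.topologicalClosure) :
    z ∈ closure ((p.comap p.topologicalClosure.subtype : Submodule ℂ _) :
      Set ↥p.topologicalClosure) := by
  rw [closure_subtype]
  have himg : (Subtype.val '' ((p.comap p.topologicalClosure.subtype :
      Submodule ℂ _) : Set ↥p.topologicalClosure)) = (p : Set F₀) := by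
    ext v
    constructor
    · rintro ⟨⟨w, hw⟩, hmem, rfl⟩
      exact hmem
    · intro hv
      exact ⟨⟨v, Submodule.le_topologicalClosure p hv⟩, hv, rfl⟩
  rw [himg, ← Submodule.topologicalClosure_coe]
  exact z.2

lemma unitary_of_forms {E K K' : Type*} [AddCommGroup E] [Module ℂ E]
    [NormedAddCommGroup K] [InnerProductSpace ℂ K] [CompleteSpace K]
    [NormedAddCommGroup K'] [InnerProductSpace ℂ K'] [CompleteSpace K']
    (A : E →ₗ[ℂ] K) (A' : E →ₗ[ℂ] K')
    (B : K →L[ℂ] K) (B' : K' →L[ℂ] K')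
    (hinner : ∀ x y : E, ⟪A y, A x⟫ = ⟪A' y, A' x⟫)
    (hBform : ∀ x y : E, ⟪A y, B (A x)⟫ = ⟪A' y, B' (A' x)⟫) :
    ∃ U : (LinearMap.range A).topologicalClosure ≃ₗᵢ[ℂ]
        (LinearMap.range A').topologicalClosure,
      (∀ (x : E) (hmem : A x ∈ (LinearMap.range A).topologicalClosure),
        ((U ⟨A x, hmem⟩ : (LinearMap.range A').topologicalClosure) : K') = A' x) ∧
      ∀ x y : (LinearMap.range A).topologicalClosure,
        ⟪((U y : (LinearMap.range A').topologicalClosure) : K'),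
            B' ((U x : (LinearMap.range A').topologicalClosure) : K')⟫
          = ⟪(y : K), B (x : K)⟫ := by
  -- norms agree
  have hnorm : ∀ x : E, ‖A x‖ = ‖A' x‖ := by
    intro x
    have h := hinner x x
    rw [inner_self_eq_norm_sq_to_K, inner_self_eq_norm_sq_to_K] at h
    have h2 : (‖A x‖ : ℝ) ^ 2 = ‖A' x‖ ^ 2 := by exact_mod_cast h
    nlinarith [norm_nonneg (A x), norm_nonneg (A' x)]
  have hker : LinearMap.ker A ≤ LinearMap.ker A' := by
    intro x hx
    rw [LinearMap.mem_ker] at hx ⊢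
    have := hnorm x
    rw [hx, norm_zero] at this
    exact norm_eq_zero.mp this.symm
  -- the map on range A
  set F : ↥(LinearMap.range A) →ₗ[ℂ] K' :=
    ((LinearMap.ker A).liftQ A' hker).comp
      (A.quotKerEquivRange.symm : ↥(LinearMap.range A) ≃ₗ[ℂ] _).toLinearMap with hFdef
  have hFA : ∀ (x : E) (h : A x ∈ LinearMap.range A), F ⟨A x, h⟩ = A' x := by
    intro x h
    rw [hFdef]
    simp only [LinearMap.coe_comp, LinearEquiv.coe_coe, Function.comp_apply,
      LinearMap.quotKerEquivRange_symm_apply_image, Submodule.mkQ_apply,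
      Submodule.liftQ_apply]
  have hFnorm : ∀ s : ↥(LinearMap.range A), ‖F s‖ = ‖s‖ := by
    rintro ⟨s, hs⟩
    obtain ⟨x, rfl⟩ := hs
    exact (congrArg norm (hFA x _)).trans (hnorm x).symm
  have hFmem : ∀ s : ↥(LinearMap.range A), F s ∈ LinearMap.range A' := by
    rintro ⟨s, hs⟩
    obtain ⟨x, rfl⟩ := hs
    exact ⟨x, (hFA x _).symm⟩
  set Sc := (LinearMap.range A).topologicalClosure with hScdef
  set Sc' := (LinearMap.range A').topologicalClosure with hSc'def
  set D : Submodule ℂ ↥Sc := (LinearMap.range A).comap Sc.subtype with hDdef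
  have hD : Dense (D : Set ↥Sc) := by
    intro z
    exact @hdense_aux K _ _ (LinearMap.range A) z
  -- the inclusion `D → range A`
  set e : ↥D →ₗᵢ[ℂ] ↥(LinearMap.range A) :=
    { toFun := fun d => ⟨(d : ↥Sc), d.2⟩
      map_add' := fun d₁ d₂ => Subtype.ext rfl
      map_smul' := fun c d => Subtype.ext rfl
      norm_map' := fun d => rfl } with hedef
  set Fi : ↥(LinearMap.range A) →ₗᵢ[ℂ] K' := ⟨F, hFnorm⟩ with hFidef
  set F₂ : ↥D →L[ℂ] K' := (Fi.comp e).toContinuousLinearMap with hF₂def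
  set G : ↥Sc →L[ℂ] K' := F₂.extend D.subtypeL
    with hGdef
  have hGD : ∀ d : ↥D, G (d : ↥Sc) = F ⟨(d : ↥Sc), d.2⟩ := by
    intro d
    have h := ContinuousLinearMap.extend_eq (f := F₂) (e := D.subtypeL) hD.denseRange_val
      isUniformEmbedding_subtype_val.isUniformInducing d
    rw [hGdef]
    exact h
  have hGnorm : ∀ z : ↥Sc, ‖G z‖ = ‖z‖ := by
    intro z
    have hcl : IsClosed {w : ↥Sc | ‖G w‖ = ‖w‖} :=
      isClosed_eq (continuous_norm.comp G.continuous) continuous_norm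
    refine hcl.closure_subset_iff.mpr ?_ (hD z)
    rintro w hw
    have : G w = F ⟨w, hw⟩ := hGD ⟨w, hw⟩
    simp only [Set.mem_setOf_eq, this, hFnorm]
    rfl
  have hGmem : ∀ z : ↥Sc, G z ∈ Sc' := by
    intro z
    have hcl : IsClosed {w : ↥Sc | G w ∈ Sc'} :=
      IsClosed.preimage G.continuous
        (Submodule.isClosed_topologicalClosure (LinearMap.range A'))
    refine hcl.closure_subset_iff.mpr ?_ (hD z)
    rintro w hw
    have : G w = F ⟨w, hw⟩ := hGD ⟨w, hw⟩
    simp only [Set.mem_setOf_eq, this]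
    exact Submodule.le_topologicalClosure (LinearMap.range A') (hFmem ⟨↑w, hw⟩)
  set Gr : ↥Sc →ₗᵢ[ℂ] ↥Sc' :=
    { toLinearMap := G.toLinearMap.codRestrict Sc' hGmem
      norm_map' := fun z => hGnorm z } with hGrdef
  have hGr : ∀ z : ↥Sc, ((Gr z : ↥Sc') : K') = G z := fun z => rfl
  have hGrA : ∀ (x : E) (h : A x ∈ Sc), ((Gr ⟨A x, h⟩ : ↥Sc') : K') = A' x := by
    intro x h
    rw [hGr]
    have hd : (⟨A x, h⟩ : ↥Sc) = ((⟨⟨A x, h⟩, ⟨x, rfl⟩⟩ : ↥D) : ↥Sc) := rfl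
    rw [hd, hGD ⟨⟨A x, h⟩, ⟨x, rfl⟩⟩]
    exact hFA x _
  -- surjectivity
  haveI : CompleteSpace ↥Sc := Submodule.topologicalClosure.completeSpace _
  have hclosed_range : IsClosed (Set.range Gr : Set ↥Sc') :=
    Gr.isometry.isClosedEmbedding.isClosed_range
  have hsurj : Function.Surjective Gr := by
    intro w
    have hw : w ∈ closure (((LinearMap.range A').comap Sc'.subtype : Submodule ℂ ↥Sc') :
        Set ↥Sc') := @hdense_aux K' _ _ (LinearMap.range A') w
    have hsub : (((LinearMap.range A').comap Sc'.subtype : Submodule ℂ ↥Sc') : Set ↥Sc')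
        ⊆ Set.range Gr := by
      rintro ⟨v, hv⟩ hmem
      obtain ⟨x, hx⟩ := hmem
      refine ⟨⟨A x, Submodule.le_topologicalClosure (LinearMap.range A) ⟨x, rfl⟩⟩, ?_⟩
      exact Subtype.ext ((hGrA x _).trans hx)
    exact hclosed_range.closure_subset_iff.mpr hsub hw
  have hFform : ∀ s t : ↥(LinearMap.range A),
      (⟪F t, B' (F s)⟫ : ℂ) = ⟪(t : K), B (s : K)⟫ := by
    rintro ⟨s, ⟨xs, rfl⟩⟩ ⟨t, ⟨xt, rfl⟩⟩
    exact (congrArg₂ (fun a b : K' => (⟪a, B' b⟫ : ℂ)) (hFA xt _) (hFA xs _)).trans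
      (hBform xs xt).symm
  set U := LinearIsometryEquiv.ofSurjective Gr hsurj with hUdef
  have hUcoe : ∀ z : ↥Sc, U z = Gr z := by
    intro z
    rw [hUdef, LinearIsometryEquiv.coe_ofSurjective]
  refine ⟨U, ?_, ?_⟩
  · intro x hmem
    rw [hUcoe]
    exact hGrA x hmem
  · intro x y
    rw [hUcoe, hUcoe, hGr, hGr]
    have hdd : Dense ((D : Set ↥Sc) ×ˢ (D : Set ↥Sc)) := hD.prod hD
    have hcl : IsClosed {p : ↥Sc × ↥Sc |
        (⟪G p.2, B' (G p.1)⟫ : ℂ) = ⟪(p.2 : K), B (p.1 : K)⟫} :=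
      isClosed_eq
        (Continuous.inner (G.continuous.comp continuous_snd)
          (B'.continuous.comp (G.continuous.comp continuous_fst)))
        (Continuous.inner (continuous_subtype_val.comp continuous_snd)
          (B.continuous.comp (continuous_subtype_val.comp continuous_fst)))
    refine hcl.closure_subset_iff.mpr ?_ (hdd (x, y))
    rintro ⟨p, q⟩ ⟨hp, hq⟩
    simp only [Set.mem_setOf_eq]
    rw [hGD ⟨p, hp⟩, hGD ⟨q, hq⟩]
    exact hFform ⟨p, hp⟩ ⟨q, hq⟩
/-- If `T, T'` are closed operators with the same domain, `B, B'` bounded selfadjoint, and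
`((I+iB)Th, Tk) = ((I+iB')T'h, T'k)` on the common domain, then there is a unitary
`U : clos(ran T) → clos(ran T')` with `T' = U T` and `B'_{bb} = U B_{bb} U*`, where the
compression identity is expressed as `(B' Ux, Uy) = (Bx, y)` for `x, y ∈ clos(ran T)`
(inner products written in Mathlib's convention `(x,y) = ⟪y,x⟫`). -/
theorem exists_unitary_of_form_eq {H K K' : Type*}
    [NormedAddCommGroup H] [InnerProductSpace ℂ H] [CompleteSpace H]
    [NormedAddCommGroup K] [InnerProductSpace ℂ K] [CompleteSpace K]
    [NormedAddCommGroup K'] [InnerProductSpace ℂ K'] [CompleteSpace K']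
    (T : H →ₗ.[ℂ] K) (T' : H →ₗ.[ℂ] K')
    (hT : IsClosed (T.graph : Set (H × K))) (hT' : IsClosed (T'.graph : Set (H × K')))
    (B : K →L[ℂ] K) (hB : IsSelfAdjoint B) (B' : K' →L[ℂ] K') (hB' : IsSelfAdjoint B')
    (hdom : T.domain = T'.domain)
    (hform : ∀ (h k : H) (hh : h ∈ T.domain) (hk : k ∈ T.domain),
      ⟪T ⟨k, hk⟩, T ⟨h, hh⟩ + Complex.I • B (T ⟨h, hh⟩)⟫
        = ⟪T' ⟨k, hdom ▸ hk⟩, T' ⟨h, hdom ▸ hh⟩ + Complex.I • B' (T' ⟨h, hdom ▸ hh⟩)⟫) :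
    ∃ U : (LinearMap.range T.toFun).topologicalClosure ≃ₗᵢ[ℂ]
        (LinearMap.range T'.toFun).topologicalClosure,
      (∀ (h : H) (hh : h ∈ T.domain)
        (hmem : T ⟨h, hh⟩ ∈ (LinearMap.range T.toFun).topologicalClosure),
        ((U ⟨T ⟨h, hh⟩, hmem⟩ : (LinearMap.range T'.toFun).topologicalClosure) : K')
          = T' ⟨h, hdom ▸ hh⟩) ∧
      ∀ x y : (LinearMap.range T.toFun).topologicalClosure,
        ⟪((U y : (LinearMap.range T'.toFun).topologicalClosure) : K'), B' ((U x : (LinearMap.range T'.toFun).topologicalClosure) : K')⟫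
          = ⟪(y : K), B (x : K)⟫ := by
  classical
  let A : ↥T.domain →ₗ[ℂ] K := T.toFun
  let A' : ↥T.domain →ₗ[ℂ] K' :=
    T'.toFun ∘ₗ (LinearEquiv.ofEq T.domain T'.domain hdom).toLinearMap
  have hA' : ∀ x : ↥T.domain, A' x = T' ⟨x.1, hdom ▸ x.2⟩ := fun x => rfl
  have hdiag : ∀ x : ↥T.domain,
      (⟪A x, A x + Complex.I • B (A x)⟫ : ℂ) = ⟪A' x, A' x + Complex.I • B' (A' x)⟫ :=
    fun x => hform x.1 x.1 x.2 x.2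
  obtain ⟨hinner, hBform⟩ := forms_eq_of_diag A A' B hB B' hB' hdiag
  obtain ⟨U0, hU1, hU2⟩ := unitary_of_forms A A' B B' hinner hBform
  have hre : LinearMap.range A' = LinearMap.range T'.toFun := by
    show LinearMap.range (T'.toFun ∘ₗ _) = _
    rw [LinearMap.range_comp, LinearEquiv.range, Submodule.map_top]
  have hclos : (LinearMap.range A').topologicalClosure
      = (LinearMap.range T'.toFun).topologicalClosure := by rw [hre]
  refine ⟨U0.trans (LinearIsometryEquiv.ofEq _ _ hclos), ?_, ?_⟩
  · intro h hh hmem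
    have := hU1 ⟨h, hh⟩ hmem
    rw [hA'] at this
    exact this
  · intro x y
    have := hU2 x y
    simpa using this
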